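/- Let p be a prime with p ≥ 2e·u, and let Γ : [u] × [t] → [s] be a function such that for every S ⊆ [u] with 1 ≤ |S| ≤ n we have |Γ(S)| ≥ 2|S|. Then there exists a function Π : [u] × [t] → 𝔽_p such that the u × s matrix A over 𝔽_p with entries A(x,y) = Σ_{j : Γ(x,j)=y} Π(x,j) has the property that every set of at most n rows of A is linearly independent over 𝔽_p. -/
import Mathlib


open Finset

open Classical in
lemma count_ker {u t s p : ℕ} [Fact p.Prime] (Γ : Fin u × Fin t → Fin s) (c : Fin u → ZMod p) :
    (Finset.univ.filter fun W : (Fin u × Fin t) → ZMod p =>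
      ∀ y : Fin s, ∑ z : Fin u × Fin t, (if Γ z = y then c z.1 * W z else 0) = 0).card
    ≤ p ^ (u * t - (((Finset.univ.filter fun x => c x ≠ 0) ×ˢ
        (Finset.univ : Finset (Fin t))).image Γ).card) := by
  classical
  set S : Finset (Fin u) := Finset.univ.filter fun x => c x ≠ 0 with hS
  set T : Finset (Fin s) := (S ×ˢ (Finset.univ : Finset (Fin t))).image Γ with hT
  let L : ((Fin u × Fin t) → ZMod p) →ₗ[ZMod p] ({y : Fin s // y ∈ T} → ZMod p) :=
    { toFun := fun W y => ∑ z : Fin u × Fin t, if Γ z = (y : Fin s) then c z.1 * W z else 0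
      map_add' := by
        intro W W'; funext y
        show (∑ z : Fin u × Fin t, if Γ z = (y : Fin s) then c z.1 * (W + W') z else 0) = _
        simp only [Pi.add_apply]
        rw [← Finset.sum_add_distrib]
        refine Finset.sum_congr rfl fun z _ => ?_
        split_ifs <;> ring
      map_smul' := by
        intro a W; funext y
        show (∑ z : Fin u × Fin t, if Γ z = (y : Fin s) then c z.1 * (a • W) z else 0) = _
        simp only [RingHom.id_apply, Pi.smul_apply, smul_eq_mul]
        rw [Finset.mul_sum]
        refine Finset.sum_congr rfl fun z _ => ?_
        split_ifs <;> ring }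
  have hsurj : Function.Surjective L := by
    intro v
    have hex : ∀ y : {y : Fin s // y ∈ T}, ∃ z : Fin u × Fin t, z.1 ∈ S ∧ Γ z = (y : Fin s) := by
      intro y
      obtain ⟨z, hz, hΓ⟩ := Finset.mem_image.mp y.2
      exact ⟨z, (Finset.mem_product.mp hz).1, hΓ⟩
    choose f hfS hfΓ using hex
    refine ⟨fun z => ∑ y : {y : Fin s // y ∈ T}, if z = f y then (c (f y).1)⁻¹ * v y else 0, ?_⟩
    funext y₀
    show (∑ z : Fin u × Fin t, if Γ z = (y₀ : Fin s) then
        c z.1 * (∑ y : {y : Fin s // y ∈ T}, if z = f y then (c (f y).1)⁻¹ * v y else 0) else 0) = v y₀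
    have step1 : ∀ z : Fin u × Fin t,
        (if Γ z = (y₀ : Fin s) then
          c z.1 * (∑ y : {y : Fin s // y ∈ T}, if z = f y then (c (f y).1)⁻¹ * v y else 0) else 0)
        = ∑ y : {y : Fin s // y ∈ T}, if z = f y then
            (if Γ z = (y₀ : Fin s) then c z.1 * ((c (f y).1)⁻¹ * v y) else 0) else 0 := by
      intro z
      split_ifs with h
      · rw [Finset.mul_sum]
        refine Finset.sum_congr rfl fun y _ => ?_
        split_ifs with h2 <;> simp [h]
      · symm
        refine Finset.sum_eq_zero fun y _ => ?_
        split_ifs with h2 <;> simp [h]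
    rw [Finset.sum_congr rfl fun z _ => step1 z, Finset.sum_comm]
    have step2 : ∀ y : {y : Fin s // y ∈ T},
        (∑ z : Fin u × Fin t, if z = f y then
          (if Γ z = (y₀ : Fin s) then c z.1 * ((c (f y).1)⁻¹ * v y) else 0) else 0)
        = if y = y₀ then v y else 0 := by
      intro y
      rw [Finset.sum_ite_eq' Finset.univ (f y)]
      simp only [Finset.mem_univ, if_true, hfΓ y]
      have hcy : c (f y).1 ≠ 0 := by
        have := hfS y
        rw [hS] at this
        exact (Finset.mem_filter.mp this).2
      by_cases h : (y : Fin s) = (y₀ : Fin s)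
      · rw [if_pos h, if_pos (Subtype.ext h), ← mul_assoc, mul_inv_cancel₀ hcy, one_mul]
      · rw [if_neg h, if_neg (fun hh => h (congrArg _ hh))]
    rw [Finset.sum_congr rfl fun y _ => step2 y, Finset.sum_ite_eq' Finset.univ y₀]
    simp
  -- cardinality of kernel
  have hfr : Module.finrank (ZMod p) (LinearMap.ker L) = u * t - T.card := by
    have h1 := LinearMap.finrank_range_add_finrank_ker L
    rw [LinearMap.range_eq_top.mpr hsurj, finrank_top] at h1
    have h2 : Module.finrank (ZMod p) ({y : Fin s // y ∈ T} → ZMod p) = T.card := by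
      rw [Module.finrank_pi, Fintype.card_coe]
    have h3 : Module.finrank (ZMod p) ((Fin u × Fin t) → ZMod p) = u * t := by
      rw [Module.finrank_pi, Fintype.card_prod, Fintype.card_fin, Fintype.card_fin]
    omega
  have hcard : Fintype.card (LinearMap.ker L) = p ^ (u * t - T.card) := by
    rw [Module.card_eq_pow_finrank (K := ZMod p), hfr, ZMod.card]
  rw [← hcard]
  have hsub : (Finset.univ.filter fun W : (Fin u × Fin t) → ZMod p =>
      ∀ y : Fin s, ∑ z : Fin u × Fin t, (if Γ z = y then c z.1 * W z else 0) = 0)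
      ⊆ Finset.univ.filter fun W => W ∈ LinearMap.ker L := by
    intro W hW
    rw [Finset.mem_filter] at hW ⊢
    refine ⟨Finset.mem_univ _, ?_⟩
    rw [LinearMap.mem_ker]
    funext y
    exact hW.2 (y : Fin s)
  refine (Finset.card_le_card hsub).trans ?_
  rw [← Fintype.card_subtype]


open Finset

open Classical in
lemma count_support {u p : ℕ} [Fact p.Prime] (S : Finset (Fin u)) :
    (Finset.univ.filter fun c : Fin u → ZMod p =>
      (Finset.univ.filter fun x => c x ≠ 0) = S).card ≤ (p - 1) ^ S.card := by
  classical
  have hone : (1 : ZMod p) ≠ 0 := one_ne_zero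
  have hcount : Fintype.card ({x : Fin u // x ∈ S} → {a : ZMod p // a ≠ 0})
      = (p - 1) ^ S.card := by
    rw [Fintype.card_fun]
    congr 1
    · rw [Fintype.card_subtype_compl, ZMod.card, Fintype.card_subtype_eq]
    · exact Fintype.card_coe S
  let F : (Fin u → ZMod p) → ({x : Fin u // x ∈ S} → {a : ZMod p // a ≠ 0}) :=
    fun c x => if h : c x.1 ≠ 0 then ⟨c x.1, h⟩ else ⟨1, hone⟩
  have hmaps : ∀ c ∈ (Finset.univ.filter fun c : Fin u → ZMod p =>
      (Finset.univ.filter fun x => c x ≠ 0) = S), F c ∈ Finset.univ :=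
    fun _ _ => Finset.mem_univ _
  have hinj : Set.InjOn F (Finset.univ.filter fun c : Fin u → ZMod p =>
      (Finset.univ.filter fun x => c x ≠ 0) = S) := by
    intro c hc c' hc' hF
    rw [Finset.coe_filter] at hc hc'
    simp only [Set.mem_setOf_eq, Finset.mem_univ, true_and] at hc hc'
    funext x
    by_cases hx : x ∈ S
    · have hx1 : x ∈ Finset.univ.filter fun x => c x ≠ 0 := hc.symm ▸ hx
      have hx2 : x ∈ Finset.univ.filter fun x => c' x ≠ 0 := hc'.symm ▸ hx
      have h1 : c x ≠ 0 := (Finset.mem_filter.mp hx1).2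
      have h2 : c' x ≠ 0 := (Finset.mem_filter.mp hx2).2
      have := congrFun hF ⟨x, hx⟩
      simp only [F, dif_pos h1, dif_pos h2] at this
      exact congrArg Subtype.val this
    · have h1 : ¬ c x ≠ 0 := fun h =>
        hx (hc ▸ (Finset.mem_filter.mpr ⟨Finset.mem_univ _, h⟩))
      have h2 : ¬ c' x ≠ 0 := fun h =>
        hx (hc' ▸ (Finset.mem_filter.mpr ⟨Finset.mem_univ _, h⟩))
      rw [not_not] at h1 h2
      rw [h1, h2]
  have := Finset.card_le_card_of_injOn F hmaps hinj
  simpa [hcount] using this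

lemma numeric {u t p : ℕ} (hu : 1 ≤ u) (ht : 2 ≤ t) (hp : 2 ≤ p)
    (hpu : 2 * Real.exp 1 * u ≤ p) :
    ∑ S ∈ (Finset.univ : Finset (Fin u)).powerset.filter (fun S => S.Nonempty),
      (p - 1) ^ S.card * p ^ (u * t - 2 * S.card) < p ^ (u * t) := by
  classical
  set f : ℕ → ℕ := fun k => (p - 1) ^ k * p ^ (u * t - 2 * k) with hf
  -- full powerset sum
  have hsplit : ∑ S ∈ (Finset.univ : Finset (Fin u)).powerset.filter (fun S => S.Nonempty),
        f S.card + p ^ (u * t)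
      = ∑ S ∈ (Finset.univ : Finset (Fin u)).powerset, f S.card := by
    rw [← Finset.sum_filter_add_sum_filter_not ((Finset.univ : Finset (Fin u)).powerset)
      (fun S => S.Nonempty) (fun S => f S.card)]
    congr 1
    have : (Finset.univ : Finset (Fin u)).powerset.filter (fun S => ¬ S.Nonempty) = {∅} := by
      ext S
      simp [Finset.not_nonempty_iff_eq_empty]
    rw [this, Finset.sum_singleton]
    simp [hf]
  have hmain : ∑ S ∈ (Finset.univ : Finset (Fin u)).powerset, f S.card < 2 * p ^ (u * t) := by
    rw [Finset.sum_powerset_apply_card f]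
    -- bound each term
    have hterm : ∀ k ∈ Finset.range (Finset.card (Finset.univ : Finset (Fin u)) + 1),
        Nat.choose (Finset.card (Finset.univ : Finset (Fin u))) k • f k
        ≤ Nat.choose u k * p ^ (u * t - k) := by
      intro k hk
      rw [Finset.mem_range, Finset.card_univ, Fintype.card_fin] at hk
      rw [Finset.card_univ, Fintype.card_fin, smul_eq_mul]
      refine Nat.mul_le_mul_left _ ?_
      have h2k : 2 * k ≤ u * t := by nlinarith
      calc (p - 1) ^ k * p ^ (u * t - 2 * k)
          ≤ p ^ k * p ^ (u * t - 2 * k) :=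
            Nat.mul_le_mul_right _ (Nat.pow_le_pow_left (Nat.sub_le p 1) k)
        _ = p ^ (u * t - k) := by rw [← pow_add]; congr 1; omega
    refine lt_of_le_of_lt (Finset.sum_le_sum hterm) ?_
    -- now real estimates
    have hp0 : (0 : ℝ) < p := by positivity
    have hcast : ((∑ k ∈ Finset.range (Finset.card (Finset.univ : Finset (Fin u)) + 1),
        Nat.choose u k * p ^ (u * t - k) : ℕ) : ℝ)
        = (p : ℝ) ^ (u * t) * (1 / p + 1) ^ u := by
      rw [Finset.card_univ, Fintype.card_fin]
      push_cast
      rw [add_pow, Finset.mul_sum]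
      refine Finset.sum_congr rfl fun k hk => ?_
      rw [Finset.mem_range] at hk
      have hk' : k ≤ u * t := by nlinarith
      rw [one_pow, mul_one, div_pow, one_pow]
      rw [pow_sub₀ _ (ne_of_gt hp0) hk']
      ring
    have hexp2 : ((1 : ℝ) / p + 1) ^ u < 2 := by
      have h1 : ((1 : ℝ) / p + 1) ^ u ≤ Real.exp (1 / p) ^ u :=
        pow_le_pow_left₀ (by positivity) (Real.add_one_le_exp _) u
      have h2 : Real.exp (1 / p : ℝ) ^ u = Real.exp (u * (1 / p)) := by
        rw [← Real.exp_nat_mul]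
      have h3 : (u : ℝ) * (1 / p) ≤ 1 / (2 * Real.exp 1) := by
        rw [mul_one_div, div_le_div_iff₀ hp0 (by positivity)]
        calc (u : ℝ) * (2 * Real.exp 1) = 2 * Real.exp 1 * u := by ring
          _ ≤ p := hpu
          _ = 1 * p := (one_mul _).symm
      have h4 : (1 : ℝ) / (2 * Real.exp 1) < Real.log 2 := by
        have he : (2.7182818283 : ℝ) < Real.exp 1 := Real.exp_one_gt_d9
        have hl : (0.6931471803 : ℝ) < Real.log 2 := Real.log_two_gt_d9
        have : (1 : ℝ) / (2 * Real.exp 1) < 1 / 4 := by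
          rw [div_lt_div_iff₀ (by nlinarith) (by norm_num)]
          nlinarith
        linarith
      calc ((1 : ℝ) / p + 1) ^ u ≤ Real.exp (u * (1 / p)) := h2 ▸ h1
        _ ≤ Real.exp (1 / (2 * Real.exp 1)) := Real.exp_le_exp.mpr h3
        _ < Real.exp (Real.log 2) := Real.exp_lt_exp.mpr h4
        _ = 2 := Real.exp_log (by norm_num)
    have : ((∑ k ∈ Finset.range (Finset.card (Finset.univ : Finset (Fin u)) + 1),
        Nat.choose u k * p ^ (u * t - k) : ℕ) : ℝ) < 2 * (p : ℝ) ^ (u * t) := by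
      rw [hcast]
      calc (p : ℝ) ^ (u * t) * (1 / p + 1) ^ u < (p : ℝ) ^ (u * t) * 2 :=
        (mul_lt_mul_iff_right₀ (by positivity)).mpr hexp2
        _ = 2 * (p : ℝ) ^ (u * t) := by ring
    exact_mod_cast this
  have hgoal : ∑ S ∈ (Finset.univ : Finset (Fin u)).powerset.filter (fun S => S.Nonempty),
      (p - 1) ^ S.card * p ^ (u * t - 2 * S.card)
      = ∑ S ∈ (Finset.univ : Finset (Fin u)).powerset.filter (fun S => S.Nonempty),
        f S.card := rfl
  omega

/-- For a `(≤ n, 2)`-expander `Γ` and a prime `p ≥ 2e·u`, there is a weight function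
`Π` making `(Γ, Π)` useful: every set of at most `n` rows of the matrix `A_{Γ,Π}` is
linearly independent over `𝔽_p`. -/

theorem stmt3 (u t s n p : ℕ) (hp : p.Prime) [NeZero p] (hpu : 2 * Real.exp 1 * u ≤ p)
    (Γ : Fin u × Fin t → Fin s)
    (hexp : ∀ S : Finset (Fin u), 1 ≤ S.card → S.card ≤ n →
      2 * S.card ≤ ((S ×ˢ (Finset.univ : Finset (Fin t))).image Γ).card) :
    ∃ W : Fin u × Fin t → ZMod p,
      ∀ X : Finset (Fin u), X.card ≤ n →
        LinearIndependent (ZMod p)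
          (fun x : X => (fun y : Fin s =>
            ∑ j : Fin t, if Γ (x.1, j) = y then W (x.1, j) else 0)) := by
  classical
  haveI : Fact p.Prime := ⟨hp⟩
  -- trivial cases
  by_cases htriv : u = 0 ∨ n = 0
  · refine ⟨0, fun X hX => ?_⟩
    have hXe : X = ∅ := by
      rcases htriv with h | h
      · subst h; exact Finset.eq_empty_of_isEmpty X
      · subst h; exact Finset.card_eq_zero.mp (Nat.le_zero.mp hX)
    subst hXe
    haveI : IsEmpty {x : Fin u // x ∈ (∅ : Finset (Fin u))} :=
      ⟨fun x => absurd x.2 (Finset.notMem_empty _)⟩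
    exact linearIndependent_empty_type
  push_neg at htriv
  obtain ⟨hu0, hn0⟩ := htriv
  have hu : 1 ≤ u := Nat.one_le_iff_ne_zero.mpr hu0
  have hn : 1 ≤ n := Nat.one_le_iff_ne_zero.mpr hn0
  have hp2 : 2 ≤ p := hp.two_le
  -- t ≥ 2
  have ht : 2 ≤ t := by
    have hx : ({(⟨0, hu⟩ : Fin u)} : Finset (Fin u)).card = 1 := Finset.card_singleton _
    have h1 := hexp {⟨0, hu⟩} (by rw [hx]) (by rw [hx]; exact hn)
    calc 2 = 2 * ({(⟨0, hu⟩ : Fin u)} : Finset (Fin u)).card := by rw [hx]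
      _ ≤ ((({(⟨0, hu⟩ : Fin u)} : Finset (Fin u)) ×ˢ Finset.univ).image Γ).card := h1
      _ ≤ (({(⟨0, hu⟩ : Fin u)} : Finset (Fin u)) ×ˢ (Finset.univ : Finset (Fin t))).card :=
          Finset.card_image_le
      _ = t := by rw [Finset.card_product, hx, Finset.card_univ, Fintype.card_fin, one_mul]
  -- the bad set
  set Bad : Finset ((Fin u × Fin t) → ZMod p) := Finset.univ.filter (fun W =>
    ∃ c : Fin u → ZMod p, c ≠ 0 ∧ (Finset.univ.filter fun x => c x ≠ 0).card ≤ n ∧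
      ∀ y : Fin s, ∑ z : Fin u × Fin t, (if Γ z = y then c z.1 * W z else 0) = 0) with hBadDef
  have hBadCard : Bad.card < p ^ (u * t) := by
    have hsub : Bad ⊆ ((Finset.univ : Finset (Fin u)).powerset.filter
        (fun S => S.Nonempty ∧ S.card ≤ n)).biUnion (fun S =>
          Finset.univ.filter (fun W : (Fin u × Fin t) → ZMod p =>
            ∃ c : Fin u → ZMod p, (Finset.univ.filter fun x => c x ≠ 0) = S ∧
              ∀ y : Fin s, ∑ z : Fin u × Fin t, (if Γ z = y then c z.1 * W z else 0) = 0)) := by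
      intro W hW
      rw [hBadDef, Finset.mem_filter] at hW
      obtain ⟨-, c, hc0, hcn, heq⟩ := hW
      refine Finset.mem_biUnion.mpr ⟨Finset.univ.filter fun x => c x ≠ 0, ?_, ?_⟩
      · refine Finset.mem_filter.mpr ⟨Finset.mem_powerset.mpr (Finset.filter_subset _ _), ?_, hcn⟩
        obtain ⟨x, hx⟩ := Function.ne_iff.mp hc0
        exact ⟨x, Finset.mem_filter.mpr ⟨Finset.mem_univ _, hx⟩⟩
      · exact Finset.mem_filter.mpr ⟨Finset.mem_univ _, c, rfl, heq⟩
    have hinner : ∀ S ∈ (Finset.univ : Finset (Fin u)).powerset.filter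
        (fun S => S.Nonempty ∧ S.card ≤ n),
        (Finset.univ.filter (fun W : (Fin u × Fin t) → ZMod p =>
            ∃ c : Fin u → ZMod p, (Finset.univ.filter fun x => c x ≠ 0) = S ∧
              ∀ y : Fin s, ∑ z : Fin u × Fin t, (if Γ z = y then c z.1 * W z else 0) = 0)).card
          ≤ (p - 1) ^ S.card * p ^ (u * t - 2 * S.card) := by
      intro S hS
      rw [Finset.mem_filter] at hS
      obtain ⟨-, hSne, hSn⟩ := hS
      have hm := hexp S (Finset.card_pos.mpr hSne) hSn
      have hsub2 : (Finset.univ.filter (fun W : (Fin u × Fin t) → ZMod p =>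
            ∃ c : Fin u → ZMod p, (Finset.univ.filter fun x => c x ≠ 0) = S ∧
              ∀ y : Fin s, ∑ z : Fin u × Fin t, (if Γ z = y then c z.1 * W z else 0) = 0))
          ⊆ (Finset.univ.filter fun c : Fin u → ZMod p =>
              (Finset.univ.filter fun x => c x ≠ 0) = S).biUnion (fun c =>
            Finset.univ.filter (fun W : (Fin u × Fin t) → ZMod p =>
              ∀ y : Fin s, ∑ z : Fin u × Fin t, (if Γ z = y then c z.1 * W z else 0) = 0)) := by
        intro W hW
        rw [Finset.mem_filter] at hW
        obtain ⟨-, c, hcS, heq⟩ := hW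
        exact Finset.mem_biUnion.mpr ⟨c, Finset.mem_filter.mpr ⟨Finset.mem_univ _, hcS⟩,
          Finset.mem_filter.mpr ⟨Finset.mem_univ _, heq⟩⟩
      calc _ ≤ _ := Finset.card_le_card hsub2
        _ ≤ ∑ c ∈ (Finset.univ.filter fun c : Fin u → ZMod p =>
              (Finset.univ.filter fun x => c x ≠ 0) = S),
            (Finset.univ.filter (fun W : (Fin u × Fin t) → ZMod p =>
              ∀ y : Fin s, ∑ z : Fin u × Fin t, (if Γ z = y then c z.1 * W z else 0) = 0)).card :=
          Finset.card_biUnion_le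
        _ ≤ ∑ c ∈ (Finset.univ.filter fun c : Fin u → ZMod p =>
              (Finset.univ.filter fun x => c x ≠ 0) = S), p ^ (u * t - 2 * S.card) := by
          refine Finset.sum_le_sum fun c hc => ?_
          rw [Finset.mem_filter] at hc
          refine (count_ker Γ c).trans ?_
          rw [hc.2]
          exact Nat.pow_le_pow_right hp.pos (Nat.sub_le_sub_left hm _)
        _ = (Finset.univ.filter fun c : Fin u → ZMod p =>
              (Finset.univ.filter fun x => c x ≠ 0) = S).card * p ^ (u * t - 2 * S.card) := by
          rw [Finset.sum_const, smul_eq_mul]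
        _ ≤ (p - 1) ^ S.card * p ^ (u * t - 2 * S.card) :=
          Nat.mul_le_mul_right _ (count_support S)
    calc Bad.card ≤ _ := Finset.card_le_card hsub
      _ ≤ ∑ S ∈ (Finset.univ : Finset (Fin u)).powerset.filter
            (fun S => S.Nonempty ∧ S.card ≤ n),
          (Finset.univ.filter (fun W : (Fin u × Fin t) → ZMod p =>
            ∃ c : Fin u → ZMod p, (Finset.univ.filter fun x => c x ≠ 0) = S ∧
              ∀ y : Fin s, ∑ z : Fin u × Fin t,
                (if Γ z = y then c z.1 * W z else 0) = 0)).card := Finset.card_biUnion_le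
      _ ≤ ∑ S ∈ (Finset.univ : Finset (Fin u)).powerset.filter
            (fun S => S.Nonempty ∧ S.card ≤ n),
          (p - 1) ^ S.card * p ^ (u * t - 2 * S.card) := Finset.sum_le_sum hinner
      _ ≤ ∑ S ∈ (Finset.univ : Finset (Fin u)).powerset.filter (fun S => S.Nonempty),
          (p - 1) ^ S.card * p ^ (u * t - 2 * S.card) := by
        refine Finset.sum_le_sum_of_subset fun S hS => ?_
        rw [Finset.mem_filter] at hS ⊢
        exact ⟨hS.1, hS.2.1⟩
      _ < p ^ (u * t) := numeric hu ht hp2 hpu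
  -- pick a good W
  have hcardV : Fintype.card ((Fin u × Fin t) → ZMod p) = p ^ (u * t) := by
    rw [Fintype.card_fun, ZMod.card, Fintype.card_prod, Fintype.card_fin, Fintype.card_fin]
  have hne : ∃ W : (Fin u × Fin t) → ZMod p, W ∉ Bad := by
    by_contra h
    push_neg at h
    have : Bad = Finset.univ := Finset.eq_univ_iff_forall.mpr h
    rw [this, Finset.card_univ, hcardV] at hBadCard
    exact lt_irrefl _ hBadCard
  obtain ⟨W, hW⟩ := hne
  refine ⟨W, fun X hX => ?_⟩
  by_contra hli
  rw [Fintype.not_linearIndependent_iff] at hli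
  obtain ⟨g, hsum, i, hgi⟩ := hli
  set c : Fin u → ZMod p := fun x => if h : x ∈ X then g ⟨x, h⟩ else 0 with hc
  apply hW
  rw [hBadDef, Finset.mem_filter]
  refine ⟨Finset.mem_univ _, c, ?_, ?_, ?_⟩
  · intro h0
    apply hgi
    have h1 : (if h : i.1 ∈ X then g ⟨i.1, h⟩ else 0) = 0 := congrFun h0 i.1
    rwa [dif_pos i.2] at h1
  · refine (Finset.card_le_card ?_).trans hX
    intro x hx
    rw [Finset.mem_filter] at hx
    by_contra hxX
    refine hx.2 ?_
    show (if h : x ∈ X then g ⟨x, h⟩ else 0) = 0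
    exact dif_neg hxX
  · intro y
    rw [Fintype.sum_prod_type]
    have hrow : ∀ x : Fin u, (∑ j : Fin t, if Γ (x, j) = y then c x * W (x, j) else 0)
        = c x * ∑ j : Fin t, (if Γ (x, j) = y then W (x, j) else 0) := by
      intro x
      rw [Finset.mul_sum]
      refine Finset.sum_congr rfl fun j _ => ?_
      rw [mul_ite, mul_zero]
    rw [Finset.sum_congr rfl fun x _ => hrow x]
    rw [← Finset.sum_subset (Finset.subset_univ X) (fun x _ hx => by
      have hcx : c x = 0 := by
        show (if h : x ∈ X then g ⟨x, h⟩ else 0) = 0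
        exact dif_neg hx
      rw [hcx, zero_mul])]
    have h2 := congrFun hsum y
    rw [Finset.sum_apply] at h2
    simp only [Pi.smul_apply, smul_eq_mul, Pi.zero_apply] at h2
    refine Eq.trans ?_ h2
    rw [← Finset.sum_attach X (fun x =>
      c x * ∑ j : Fin t, (if Γ (x, j) = y then W (x, j) else 0)), Finset.univ_eq_attach]
    refine Finset.sum_congr rfl fun x _ => ?_
    congr 1
    show (if h : x.1 ∈ X then g ⟨x.1, h⟩ else 0) = g x
    rw [dif_pos x.2]
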